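/- arXiv:2102.07479 — 2 statements merged into one kernel-verified Lean document; each statement's English description precedes it below -/
import Mathlib

section
/- Let ρ be a density matrix on ℂⁿ and let σ be a positive definite density matrix on ℂⁿ. Then S_meas(ρ|σ) ≥ −2 log Tr |ρ^{1/2} σ^{1/2}|, i.e. the measured relative entropy is bounded below by minus the logarithm of the squared fidelity F(ρ|σ) = Tr|ρ^{1/2} σ^{1/2}|. -/
/-!
STATEMENT 8: The measured relative entropy dominates minus the log of the squared
fidelity: S_meas(ρ|σ) ≥ −2 log Tr |ρ^{1/2} σ^{1/2}|, for ρ a density matrix and σ a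
positive definite density matrix.  S_meas takes values in [0,∞], formalized in `EReal`.
-/

open Matrix Complex
open scoped ComplexOrder

/-- Complex power `A^z` of a Hermitian matrix `A`, via the spectral functional
calculus (junk value `0` if `A` is not Hermitian); for eigenvalue `0` and `Re z > 0`
this uses `(0 : ℂ) ^ z = 0`. -/
noncomputable def mcpow {n : ℕ} (A : Matrix (Fin n) (Fin n) ℂ) (z : ℂ) :
    Matrix (Fin n) (Fin n) ℂ :=
  if hA : A.IsHermitian then
    (hA.eigenvectorUnitary : Matrix (Fin n) (Fin n) ℂ) *
      Matrix.diagonal (fun i => (hA.eigenvalues i : ℂ) ^ z) *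
      (hA.eigenvectorUnitary : Matrix (Fin n) (Fin n) ℂ)ᴴ
  else 0

/-- `Tr |M|`, where `|M| = (M* M)^{1/2}`. -/
noncomputable def trAbs {n : ℕ} (M : Matrix (Fin n) (Fin n) ℂ) : ℝ :=
  ((mcpow (Mᴴ * M) ((1 / 2 : ℝ) : ℂ)).trace).re

/-- The measured relative entropy
`S_meas(ρ|ω) = sup { Tr(ρh) − log Tr(ω e^h) : h Hermitian }`, as an extended real. -/
noncomputable def Smeas {n : ℕ} (ρ ω : Matrix (Fin n) (Fin n) ℂ) : EReal :=
  ⨆ h : {h : Matrix (Fin n) (Fin n) ℂ // h.IsHermitian},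
    (((((ρ * h.1).trace).re - Real.log (((ω * NormedSpace.exp h.1).trace).re)
      : ℝ)) : EReal)

variable {n : ℕ}

section aux

lemma star_mul_self_unitary {A : Matrix (Fin n) (Fin n) ℂ} (hA : A.IsHermitian) :
    (hA.eigenvectorUnitary : Matrix (Fin n) (Fin n) ℂ)ᴴ *
      (hA.eigenvectorUnitary : Matrix (Fin n) (Fin n) ℂ) = 1 := by
  rw [← Matrix.star_eq_conjTranspose]
  exact Unitary.coe_star_mul_self hA.eigenvectorUnitary

lemma mul_star_self_unitary {A : Matrix (Fin n) (Fin n) ℂ} (hA : A.IsHermitian) :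
    (hA.eigenvectorUnitary : Matrix (Fin n) (Fin n) ℂ) *
      (hA.eigenvectorUnitary : Matrix (Fin n) (Fin n) ℂ)ᴴ = 1 := by
  rw [← Matrix.star_eq_conjTranspose]
  exact Unitary.coe_mul_star_self hA.eigenvectorUnitary

lemma conj_mul_conj (U : Matrix (Fin n) (Fin n) ℂ) (hU : Uᴴ * U = 1) (f g : Fin n → ℂ) :
    (U * diagonal f * Uᴴ) * (U * diagonal g * Uᴴ) =
      U * diagonal (fun i => f i * g i) * Uᴴ := by
  have : diagonal f * (Uᴴ * U) * diagonal g = diagonal (fun i => f i * g i) := by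
    rw [hU, mul_one, diagonal_mul_diagonal]
  calc (U * diagonal f * Uᴴ) * (U * diagonal g * Uᴴ)
      = U * (diagonal f * (Uᴴ * U) * diagonal g) * Uᴴ := by
        simp only [Matrix.mul_assoc]
    _ = U * diagonal (fun i => f i * g i) * Uᴴ := by rw [this]

lemma mcpow_eq {A : Matrix (Fin n) (Fin n) ℂ} (hA : A.IsHermitian)
    (hnn : ∀ i, 0 ≤ hA.eigenvalues i) (r : ℝ) :
    mcpow A (r : ℂ) = (hA.eigenvectorUnitary : Matrix (Fin n) (Fin n) ℂ) *
      diagonal (fun i => ((hA.eigenvalues i ^ r : ℝ) : ℂ)) *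
      (hA.eigenvectorUnitary : Matrix (Fin n) (Fin n) ℂ)ᴴ := by
  rw [mcpow, dif_pos hA]
  have : (fun i => (hA.eigenvalues i : ℂ) ^ (r : ℂ))
      = fun i => ((hA.eigenvalues i ^ r : ℝ) : ℂ) := by
    funext i; exact (Complex.ofReal_cpow (hnn i) r).symm
  rw [this]

lemma isHermitian_conj_diag_real (U : Matrix (Fin n) (Fin n) ℂ) (v : Fin n → ℝ) :
    (U * diagonal (fun i => ((v i : ℝ) : ℂ)) * Uᴴ).IsHermitian := by
  rw [Matrix.IsHermitian, conjTranspose_mul, conjTranspose_mul,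
    conjTranspose_conjTranspose, diagonal_conjTranspose]
  have : star (fun i => ((v i : ℝ) : ℂ)) = fun i => ((v i : ℝ) : ℂ) := by
    funext i; simp
  rw [this, Matrix.mul_assoc]

lemma posSemidef_conj_diag_real (U : Matrix (Fin n) (Fin n) ℂ) {v : Fin n → ℝ}
    (hv : ∀ i, 0 ≤ v i) :
    (U * diagonal (fun i => ((v i : ℝ) : ℂ)) * Uᴴ).PosSemidef := by
  refine Matrix.PosSemidef.mul_mul_conjTranspose_same ?_ U
  rw [Matrix.posSemidef_diagonal_iff]
  intro i
  simpa using hv i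

end aux

section aux2
variable {n : ℕ}

lemma spectral_form {A : Matrix (Fin n) (Fin n) ℂ} (hA : A.IsHermitian) :
    A = (hA.eigenvectorUnitary : Matrix (Fin n) (Fin n) ℂ) *
      diagonal (fun i => ((hA.eigenvalues i : ℝ) : ℂ)) *
      (hA.eigenvectorUnitary : Matrix (Fin n) (Fin n) ℂ)ᴴ := by
  have := hA.spectral_theorem
  rwa [Unitary.conjStarAlgAut_apply, Matrix.star_eq_conjTranspose] at this

lemma mcpow_half_isHermitian {A : Matrix (Fin n) (Fin n) ℂ} (hA : A.PosSemidef) (r : ℝ) :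
    (mcpow A (r : ℂ)).IsHermitian := by
  rw [mcpow_eq hA.1 (fun i => hA.eigenvalues_nonneg i) r]
  exact isHermitian_conj_diag_real _ _

lemma mcpow_posSemidef {A : Matrix (Fin n) (Fin n) ℂ} (hA : A.PosSemidef) (r : ℝ) :
    (mcpow A (r : ℂ)).PosSemidef := by
  rw [mcpow_eq hA.1 (fun i => hA.eigenvalues_nonneg i) r]
  exact posSemidef_conj_diag_real _ (fun i => Real.rpow_nonneg (hA.eigenvalues_nonneg i) r)

lemma mcpow_half_mul_self {A : Matrix (Fin n) (Fin n) ℂ} (hA : A.PosSemidef) :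
    mcpow A ((1/2 : ℝ) : ℂ) * mcpow A ((1/2 : ℝ) : ℂ) = A := by
  rw [mcpow_eq hA.1 (fun i => hA.eigenvalues_nonneg i) (1/2),
    conj_mul_conj _ (star_mul_self_unitary hA.1)]
  have : (fun i => ((hA.1.eigenvalues i ^ (1/2 : ℝ) : ℝ) : ℂ) *
      ((hA.1.eigenvalues i ^ (1/2 : ℝ) : ℝ) : ℂ)) =
      fun i => ((hA.1.eigenvalues i : ℝ) : ℂ) := by
    funext i
    rw [← Complex.ofReal_mul, ← Real.rpow_add' (hA.eigenvalues_nonneg i) (by norm_num)]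
    norm_num
  rw [this, ← spectral_form hA.1]

lemma mcpow_half_mul_neg_half {A : Matrix (Fin n) (Fin n) ℂ} (hA : A.PosDef) :
    mcpow A ((1/2 : ℝ) : ℂ) * mcpow A ((-(1/2) : ℝ) : ℂ) = 1 := by
  rw [mcpow_eq hA.1 (fun i => hA.posSemidef.eigenvalues_nonneg i) (1/2),
    mcpow_eq hA.1 (fun i => hA.posSemidef.eigenvalues_nonneg i) (-(1/2)),
    conj_mul_conj _ (star_mul_self_unitary hA.1)]
  have : (fun i => ((hA.1.eigenvalues i ^ (1/2 : ℝ) : ℝ) : ℂ) *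
      ((hA.1.eigenvalues i ^ (-(1/2) : ℝ) : ℝ) : ℂ)) = fun _ => (1 : ℂ) := by
    funext i
    rw [← Complex.ofReal_mul, ← Real.rpow_add (hA.eigenvalues_pos i)]
    norm_num
  rw [this, diagonal_one, mul_one, mul_star_self_unitary hA.1]

lemma mcpow_neg_half_mul_half {A : Matrix (Fin n) (Fin n) ℂ} (hA : A.PosDef) :
    mcpow A ((-(1/2) : ℝ) : ℂ) * mcpow A ((1/2 : ℝ) : ℂ) = 1 := by
  rw [mcpow_eq hA.1 (fun i => hA.posSemidef.eigenvalues_nonneg i) (1/2),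
    mcpow_eq hA.1 (fun i => hA.posSemidef.eigenvalues_nonneg i) (-(1/2)),
    conj_mul_conj _ (star_mul_self_unitary hA.1)]
  have : (fun i => ((hA.1.eigenvalues i ^ (-(1/2) : ℝ) : ℝ) : ℂ) *
      ((hA.1.eigenvalues i ^ (1/2 : ℝ) : ℝ) : ℂ)) = fun _ => (1 : ℂ) := by
    funext i
    rw [← Complex.ofReal_mul, ← Real.rpow_add (hA.eigenvalues_pos i)]
    norm_num
  rw [this, diagonal_one, mul_one, mul_star_self_unitary hA.1]

lemma trace_mul_conj_diag (B W : Matrix (Fin n) (Fin n) ℂ) (c : Fin n → ℂ) :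
    (B * (W * diagonal c * Wᴴ)).trace = ∑ i, (Wᴴ * B * W) i i * c i := by
  have h1 : B * (W * diagonal c * Wᴴ) = (B * W * diagonal c) * Wᴴ := by
    simp only [Matrix.mul_assoc]
  rw [h1, Matrix.trace_mul_comm]
  have h2 : Wᴴ * (B * W * diagonal c) = (Wᴴ * B * W) * diagonal c := by
    simp only [Matrix.mul_assoc]
  rw [h2, Matrix.trace]
  congr 1
  funext i
  simp [Matrix.diag, Matrix.mul_diagonal]

lemma exp_conj_diag (W : Matrix (Fin n) (Fin n) ℂ) (hW : W * Wᴴ = 1)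
    (hW' : Wᴴ * W = 1) (c : Fin n → ℂ) :
    NormedSpace.exp (W * diagonal c * Wᴴ) =
      W * diagonal (fun i => Complex.exp (c i)) * Wᴴ := by
  have hWinv : W⁻¹ = Wᴴ := Matrix.inv_eq_right_inv hW
  have hU : IsUnit W := ⟨⟨W, Wᴴ, hW, hW'⟩, rfl⟩
  rw [← hWinv, Matrix.exp_conj W _ hU, Matrix.exp_diagonal]
  have : NormedSpace.exp c = fun i => Complex.exp (c i) := by
    rw [Pi.exp_def]
    funext i
    rw [Complex.exp_eq_exp_ℂ]
  rw [this]

end aux2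

section aux3
variable {n : ℕ}

lemma posDef_conj {σ W : Matrix (Fin n) (Fin n) ℂ} (hσ : σ.PosDef)
    (hW' : Wᴴ * W = 1) : (Wᴴ * σ * W).PosDef := by
  refine posDef_iff_dotProduct_mulVec.2 ⟨Matrix.isHermitian_conjTranspose_mul_mul W hσ.1, fun x hx => ?_⟩
  have key : star x ⬝ᵥ ((Wᴴ * σ * W) *ᵥ x) = star (W *ᵥ x) ⬝ᵥ (σ *ᵥ (W *ᵥ x)) := by
    rw [star_mulVec, ← Matrix.mulVec_mulVec, ← Matrix.mulVec_mulVec,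
      Matrix.dotProduct_mulVec (star x) Wᴴ]
  rw [key]
  refine hσ.dotProduct_mulVec_pos (x := W *ᵥ x) (fun h0 => hx ?_)
  have : (Wᴴ * W) *ᵥ x = Wᴴ *ᵥ (W *ᵥ x) := (Matrix.mulVec_mulVec _ _ _).symm
  rw [hW', Matrix.one_mulVec, h0, Matrix.mulVec_zero] at this
  exact this

lemma posDef_diag_entry {B : Matrix (Fin n) (Fin n) ℂ} (hB : B.PosDef) (i : Fin n) :
    0 < (B i i).re ∧ B i i = (((B i i).re : ℝ) : ℂ) := by
  have hx : (Pi.single i 1 : Fin n → ℂ) ≠ 0 := by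
    intro h
    have := congr_fun h i
    simp at this
  have hpos := hB.dotProduct_mulVec_pos hx
  have hval : star (Pi.single i 1 : Fin n → ℂ) ⬝ᵥ (B *ᵥ Pi.single i 1) = B i i := by
    have hs : star (Pi.single i 1 : Fin n → ℂ) = Pi.single i 1 := by
      funext j
      rcases eq_or_ne j i with rfl | hji
      · simp
      · simp [Pi.single_eq_of_ne hji]
    rw [hs, single_dotProduct, one_mul, Matrix.mulVec_single]
    simp
  rw [hval] at hpos
  rw [Complex.lt_def] at hpos
  obtain ⟨h1, h2⟩ := hpos
  simp only [Complex.zero_re, Complex.zero_im] at h1 h2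
  constructor
  · exact h1
  · exact (Complex.ext rfl (by simpa using h2) : (((B i i).re : ℝ) : ℂ) = B i i).symm

end aux3

section jensen
open Real Finset

lemma jensen_log {n : ℕ} (lam q : Fin n → ℝ) (hlam : ∀ i, 0 ≤ lam i) (hq : ∀ i, 0 < q i)
    (hsum : ∑ i, lam i ^ 2 * q i = 1) :
    -Real.log (∑ i, lam i * q i) ≤ ∑ i, lam i ^ 2 * q i * Real.log (lam i) := by
  set w : Fin n → ℝ := fun i => lam i ^ 2 * q i with hw
  set z : Fin n → ℝ := fun i => (lam i)⁻¹ with hz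
  have hwnn : ∀ i ∈ Finset.univ (α := Fin n), 0 ≤ w i := fun i _ =>
    mul_nonneg (sq_nonneg _) (hq i).le
  have hznn : ∀ i ∈ Finset.univ (α := Fin n), 0 ≤ z i := fun i _ =>
    inv_nonneg.2 (hlam i)
  have geom : ∏ i, z i ^ w i ≤ ∑ i, w i * z i :=
    Real.geom_mean_le_arith_mean_weighted Finset.univ w z hwnn hsum hznn
  have hsum2 : ∑ i, w i * z i = ∑ i, lam i * q i := by
    refine Finset.sum_congr rfl fun i _ => ?_
    rcases eq_or_ne (lam i) 0 with h0 | h0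
    · simp [hw, hz, h0]
    · simp only [hw, hz]; field_simp
  have hfac : ∀ i, 0 < z i ^ w i := by
    intro i
    rcases eq_or_ne (lam i) 0 with h0 | h0
    · simp [hw, hz, h0, Real.rpow_zero]
    · exact Real.rpow_pos_of_pos (inv_pos.2 ((hlam i).lt_of_ne (Ne.symm h0))) _
  have hprodpos : 0 < ∏ i, z i ^ w i := Finset.prod_pos fun i _ => hfac i
  have hlogprod : Real.log (∏ i, z i ^ w i) = ∑ i, w i * Real.log (z i) := by
    rw [Real.log_prod fun i _ => (hfac i).ne']
    refine Finset.sum_congr rfl fun i _ => ?_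
    rcases eq_or_ne (lam i) 0 with h0 | h0
    · simp [hw, hz, h0]
    · exact Real.log_rpow (inv_pos.2 ((hlam i).lt_of_ne (Ne.symm h0))) _
  have hle : Real.log (∏ i, z i ^ w i) ≤ Real.log (∑ i, lam i * q i) := by
    apply Real.log_le_log hprodpos
    rw [← hsum2]; exact geom
  rw [hlogprod] at hle
  have hzlog : ∑ i, w i * Real.log (z i) = -∑ i, w i * Real.log (lam i) := by
    rw [← Finset.sum_neg_distrib]
    refine Finset.sum_congr rfl fun i _ => ?_
    rw [hz]
    simp only []
    rw [Real.log_inv]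
    ring
  rw [hzlog] at hle
  have := neg_le_neg hle
  rw [neg_neg] at this
  exact this.trans_eq (by rfl)

end jensen


/-- **Measured relative entropy ≥ −log of the squared fidelity.** -/
theorem smeas_ge_neg_log_fidelity_sq {n : ℕ} (ρ σ : Matrix (Fin n) (Fin n) ℂ)
    (hρ : ρ.PosSemidef) (hρtr : ρ.trace = 1)
    (hσ : σ.PosDef) (hσtr : σ.trace = 1) :
    ((- 2 * Real.log (trAbs (mcpow ρ ((1 / 2 : ℝ) : ℂ) * mcpow σ ((1 / 2 : ℝ) : ℂ)))
      : ℝ) : EReal) ≤ Smeas ρ σ := by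
  classical
  set P := mcpow ρ ((1 / 2 : ℝ) : ℂ) with hPdef
  set Q := mcpow σ ((1 / 2 : ℝ) : ℂ) with hQdef
  set R := mcpow σ ((-(1/2) : ℝ) : ℂ) with hRdef
  have hP2 : P * P = ρ := mcpow_half_mul_self hρ
  have hQ2 : Q * Q = σ := mcpow_half_mul_self hσ.posSemidef
  have hPH : P.IsHermitian := mcpow_half_isHermitian hρ (1/2)
  have hQH : Q.IsHermitian := mcpow_half_isHermitian hσ.posSemidef (1/2)
  have hRH : R.IsHermitian := mcpow_half_isHermitian hσ.posSemidef (-(1/2))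
  have hQR : Q * R = 1 := mcpow_half_mul_neg_half hσ
  have hRQ : R * Q = 1 := mcpow_neg_half_mul_half hσ
  -- |PQ|² = QρQ
  have hT : (P * Q)ᴴ * (P * Q) = Q * ρ * Q := by
    rw [conjTranspose_mul, hQH.eq, hPH.eq]
    calc Q * P * (P * Q) = Q * (P * P) * Q := by simp only [Matrix.mul_assoc]
    _ = Q * ρ * Q := by rw [hP2]
  have hTpsd : (Q * ρ * Q).PosSemidef := by
    have := hρ.mul_mul_conjTranspose_same Q
    rwa [hQH.eq] at this
  set M := mcpow (Q * ρ * Q) ((1 / 2 : ℝ) : ℂ) with hMdef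
  have hM2 : M * M = Q * ρ * Q := mcpow_half_mul_self hTpsd
  have hMpsd : M.PosSemidef := mcpow_posSemidef hTpsd (1/2)
  have htrAbs : trAbs (P * Q) = (M.trace).re := by
    rw [trAbs, hT]
  -- A = R M R
  set A := R * M * R with hAdef
  have hApsd : A.PosSemidef := by
    have := hMpsd.mul_mul_conjTranspose_same R
    rwa [hRH.eq] at this
  have hAσA : A * σ * A = ρ := by
    calc A * σ * A = R * M * ((R * Q) * ((Q * R) * (M * R))) := by
          rw [hAdef, ← hQ2]; simp only [Matrix.mul_assoc]
    _ = R * M * (M * R) := by rw [hRQ, hQR, one_mul, one_mul]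
    _ = R * (Q * ρ * Q) * R := by rw [← hM2]; simp only [Matrix.mul_assoc]
    _ = (R * Q) * ρ * (Q * R) := by simp only [Matrix.mul_assoc]
    _ = ρ := by rw [hRQ, hQR, one_mul, mul_one]
  have hTrσA : (σ * A).trace = M.trace := by
    have e1 : σ * A = Q * (M * R) := by
      rw [hAdef, ← hQ2]
      calc Q * Q * (R * M * R) = Q * ((Q * R) * (M * R)) := by
            simp only [Matrix.mul_assoc]
      _ = Q * (M * R) := by rw [hQR, one_mul]
    have e2 : (M * R) * Q = M := by rw [Matrix.mul_assoc, hRQ, mul_one]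
    rw [e1, Matrix.trace_mul_comm, e2]
  -- spectral decomposition of A
  have hAH : A.IsHermitian := hApsd.1
  set W : Matrix (Fin n) (Fin n) ℂ := (hAH.eigenvectorUnitary : Matrix (Fin n) (Fin n) ℂ)
    with hWdef
  set lam : Fin n → ℝ := hAH.eigenvalues with hlamdef
  have hlam : ∀ i, 0 ≤ lam i := fun i => hApsd.eigenvalues_nonneg i
  have hspecA : A = W * diagonal (fun i => ((lam i : ℝ) : ℂ)) * Wᴴ := spectral_form hAH
  have hWW : W * Wᴴ = 1 := mul_star_self_unitary hAH
  have hW'W : Wᴴ * W = 1 := star_mul_self_unitary hAH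
  have collapse : ∀ X : Matrix (Fin n) (Fin n) ℂ, W * (Wᴴ * X) = X := fun X => by
    rw [← Matrix.mul_assoc, hWW, one_mul]
  -- diagonal entries
  have hσ'pd : (Wᴴ * σ * W).PosDef := posDef_conj hσ hW'W
  set q : Fin n → ℝ := fun i => ((Wᴴ * σ * W) i i).re with hqdef
  have hq_pos : ∀ i, 0 < q i := fun i => (posDef_diag_entry hσ'pd i).1
  have hq : ∀ i, (Wᴴ * σ * W) i i = ((q i : ℝ) : ℂ) := fun i => (posDef_diag_entry hσ'pd i).2
  have hWAW : Wᴴ * A * W = diagonal (fun i => ((lam i : ℝ) : ℂ)) := by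
    rw [hspecA]
    calc Wᴴ * (W * diagonal (fun i => ((lam i : ℝ) : ℂ)) * Wᴴ) * W
        = Wᴴ * W * (diagonal (fun i => ((lam i : ℝ) : ℂ)) * (Wᴴ * W)) := by
          simp only [Matrix.mul_assoc]
    _ = diagonal (fun i => ((lam i : ℝ) : ℂ)) := by rw [hW'W, mul_one, one_mul]
  have hρ' : Wᴴ * ρ * W = diagonal (fun i => ((lam i : ℝ) : ℂ)) * (Wᴴ * σ * W) *
      diagonal (fun i => ((lam i : ℝ) : ℂ)) := by
    rw [← hWAW]
    calc Wᴴ * ρ * W = Wᴴ * (A * σ * A) * W := by rw [hAσA]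
    _ = (Wᴴ * A * W) * (Wᴴ * σ * W) * (Wᴴ * A * W) := by
        simp only [Matrix.mul_assoc, collapse]
  have hρ'entry : ∀ i, (Wᴴ * ρ * W) i i = ((lam i ^ 2 * q i : ℝ) : ℂ) := by
    intro i
    rw [hρ', Matrix.mul_diagonal, Matrix.diagonal_mul, hq i]
    push_cast
    ring
  -- sums
  have hq_sum : ∑ i, q i = 1 := by
    have h1 : (Wᴴ * σ * W).trace = σ.trace := by
      rw [Matrix.trace_mul_cycle, hWW, one_mul]
    have h2 : (Wᴴ * σ * W).trace = ((∑ i, q i : ℝ) : ℂ) := by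
      rw [Matrix.trace]
      push_cast
      exact Finset.sum_congr rfl fun i _ => hq i
    rw [h2, hσtr] at h1
    exact_mod_cast h1
  have hp_sum : ∑ i, lam i ^ 2 * q i = 1 := by
    have h1 : (Wᴴ * ρ * W).trace = ρ.trace := by
      rw [Matrix.trace_mul_cycle, hWW, one_mul]
    have h2 : (Wᴴ * ρ * W).trace = ((∑ i, lam i ^ 2 * q i : ℝ) : ℂ) := by
      rw [Matrix.trace]
      push_cast
      exact Finset.sum_congr rfl fun i _ => by
        show (Wᴴ * ρ * W) i i = _
        rw [hρ'entry i]; push_cast; ring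
    rw [h2, hρtr] at h1
    exact_mod_cast h1
  have hF : (M.trace).re = ∑ i, lam i * q i := by
    have h1 : (σ * A).trace = ((∑ i, lam i * q i : ℝ) : ℂ) := by
      rw [hspecA, trace_mul_conj_diag]
      push_cast
      exact Finset.sum_congr rfl fun i _ => by rw [hq i]; push_cast; ring
    rw [hTrσA] at h1
    rw [h1]
    simp
  set Freal : ℝ := ∑ i, lam i * q i with hFdef
  have hFpos : 0 < Freal := by
    have hex : ∃ i ∈ Finset.univ (α := Fin n), 0 < lam i * q i := by
      have : ∃ i ∈ Finset.univ (α := Fin n), lam i ^ 2 * q i ≠ 0 := by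
        apply Finset.exists_ne_zero_of_sum_ne_zero
        rw [hp_sum]; norm_num
      obtain ⟨i, _, hi⟩ := this
      have hlami : 0 < lam i := by
        rcases (hlam i).lt_or_eq with h | h
        · exact h
        · exact absurd (by rw [← h]; ring) hi
      exact ⟨i, Finset.mem_univ i, mul_pos hlami (hq_pos i)⟩
    obtain ⟨i, _, hi⟩ := hex
    exact Finset.sum_pos' (fun j _ => mul_nonneg (hlam j) (hq_pos j).le)
      ⟨i, Finset.mem_univ i, hi⟩
  have hne : (Finset.univ : Finset (Fin n)).Nonempty := by
    by_contra hcon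
    rw [Finset.not_nonempty_iff_eq_empty] at hcon
    rw [hcon, Finset.sum_empty] at hq_sum
    norm_num at hq_sum
  -- rewrite goal
  rw [htrAbs, hF]
  set J : ℝ := ∑ i, lam i ^ 2 * q i * Real.log (lam i) with hJdef
  have hJensen : -Real.log Freal ≤ J := jensen_log lam q hlam hq_pos hp_sum
  refine EReal.ge_of_forall_gt_iff_ge.mp (fun cr hcr => ?_)
  have hcr' : cr < 2 * J := by
    have h0 : cr < -2 * Real.log Freal := by exact_mod_cast hcr
    linarith
  set ε : ℝ := Real.exp (2 * J - cr) - 1 with hεdef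
  have hε : 0 < ε := by
    have : (1 : ℝ) < Real.exp (2 * J - cr) := by
      calc (1 : ℝ) = Real.exp 0 := Real.exp_zero.symm
      _ < Real.exp (2 * J - cr) := Real.exp_lt_exp.2 (by linarith)
    simp only [hεdef]
    linarith
  set c : Fin n → ℝ := fun i => if lam i = 0 then Real.log ε else 2 * Real.log (lam i)
    with hcdef
  set h : Matrix (Fin n) (Fin n) ℂ := W * diagonal (fun i => ((c i : ℝ) : ℂ)) * Wᴴ
    with hhdef
  have hhH : h.IsHermitian := isHermitian_conj_diag_real W c
  -- trace of ρ h
  have htr1 : ((ρ * h).trace).re = 2 * J := by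
    have e : (ρ * h).trace = ((∑ i, lam i ^ 2 * q i * c i : ℝ) : ℂ) := by
      rw [hhdef, trace_mul_conj_diag]
      push_cast
      exact Finset.sum_congr rfl fun i _ => by rw [hρ'entry i]; push_cast; ring
    rw [e]
    have : ∑ i, lam i ^ 2 * q i * c i = 2 * J := by
      rw [hJdef, Finset.mul_sum]
      refine Finset.sum_congr rfl fun i _ => ?_
      rcases eq_or_ne (lam i) 0 with h0 | h0
      · simp [h0]
      · rw [hcdef]; simp only [if_neg h0]; ring
    rw [this]
    simp
  -- trace of σ exp h
  have htr2 : ((σ * NormedSpace.exp h).trace).re = ∑ i, q i * Real.exp (c i) := by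
    have e : (σ * NormedSpace.exp h).trace = ((∑ i, q i * Real.exp (c i) : ℝ) : ℂ) := by
      rw [hhdef, exp_conj_diag W hWW hW'W, trace_mul_conj_diag]
      push_cast
      refine Finset.sum_congr rfl fun i _ => ?_
      rw [hq i, ← Complex.ofReal_exp]
    rw [e]
    exact Complex.ofReal_re _
  set Tσ : ℝ := ∑ i, q i * Real.exp (c i) with hTσdef
  have hTσpos : 0 < Tσ :=
    Finset.sum_pos (fun i _ => mul_pos (hq_pos i) (Real.exp_pos _)) hne
  have hTσle : Tσ ≤ Real.exp (2 * J - cr) := by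
    have step : Tσ ≤ ∑ i, (q i * lam i ^ 2 + q i * ε) := by
      refine Finset.sum_le_sum fun i _ => ?_
      rcases eq_or_ne (lam i) 0 with h0 | h0
      · have hc0 : c i = Real.log ε := by rw [hcdef]; simp [h0]
        rw [hc0, Real.exp_log hε, h0]
        nlinarith [hq_pos i]
      · have hc1 : c i = 2 * Real.log (lam i) := by rw [hcdef]; simp [h0]
        have hlami : 0 < lam i := (hlam i).lt_of_ne (Ne.symm h0)
        have he : Real.exp (c i) = lam i ^ 2 := by
          have : (2 : ℝ) * Real.log (lam i) = Real.log (lam i ^ 2) := by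
            rw [Real.log_pow]; norm_num
          rw [hc1, this, Real.exp_log (by positivity)]
        rw [he]
        nlinarith [hq_pos i, hε]
    have sum_eq : ∑ i, (q i * lam i ^ 2 + q i * ε) = 1 + ε := by
      rw [Finset.sum_add_distrib]
      have e1 : ∑ i, q i * lam i ^ 2 = 1 := by
        rw [← hp_sum]
        exact Finset.sum_congr rfl fun i _ => by ring
      have e2 : ∑ i, q i * ε = ε := by
        rw [← Finset.sum_mul, hq_sum, one_mul]
      rw [e1, e2]
    rw [sum_eq] at step
    calc Tσ ≤ 1 + ε := step
    _ = Real.exp (2 * J - cr) := by rw [hεdef]; ring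
  have hlogTσ : Real.log Tσ ≤ 2 * J - cr :=
    (Real.log_le_iff_le_exp hTσpos).2 hTσle
  -- conclude
  have hval : cr ≤ ((ρ * h).trace).re - Real.log (((σ * NormedSpace.exp h).trace).re) := by
    rw [htr1, htr2]
    linarith
  calc (cr : EReal) ≤ ((((ρ * h).trace).re
        - Real.log (((σ * NormedSpace.exp h).trace).re) : ℝ) : EReal) := by
        exact_mod_cast hval
  _ ≤ Smeas ρ σ := le_iSup (fun h : {h : Matrix (Fin n) (Fin n) ℂ // h.IsHermitian} =>
        (((((ρ * h.1).trace).re - Real.log (((σ * NormedSpace.exp h.1).trace).re)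
          : ℝ)) : EReal)) ⟨h, hhH⟩
end

section
/- Let λ > 0 and let A and B be positive definite n×n complex matrices with A ≤ B in the Loewner order. Then (1 + λ A^{−1/2})^{−2} ≤ (1 + λ B^{−1/2})^{−2} in the Loewner order. In other words, the function x ↦ (λ + x^{−1/2})^{−2} is operator monotone on (0,∞). -/
/-!
STATEMENT 13: For λ > 0 and positive definite matrices A ≤ B (Loewner order),
(1 + λ A^{−1/2})^{−2} ≤ (1 + λ B^{−1/2})^{−2}, i.e. x ↦ (λ + x^{−1/2})^{−2} is
operator monotone.  The Loewner order `X ≤ Y` is expressed as `(Y - X).PosSemidef`.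
-/

open Matrix Complex
open scoped ComplexOrder

/-- Square root of a positive semidefinite matrix (the former Mathlib definition). -/
noncomputable def Matrix.PosSemidef.sqrt {n : ℕ} {A : Matrix (Fin n) (Fin n) ℂ}
    (hA : A.PosSemidef) : Matrix (Fin n) (Fin n) ℂ :=
  (hA.1.eigenvectorUnitary : Matrix (Fin n) (Fin n) ℂ) *
    Matrix.diagonal ((↑) ∘ Real.sqrt ∘ hA.1.eigenvalues) *
    (star hA.1.eigenvectorUnitary : Matrix (Fin n) (Fin n) ℂ)

lemma Matrix.PosSemidef.posSemidef_sqrt {n : ℕ} {A : Matrix (Fin n) (Fin n) ℂ}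
    (hA : A.PosSemidef) : hA.sqrt.PosSemidef := by
  have hD : (Matrix.diagonal ((↑) ∘ Real.sqrt ∘ hA.1.eigenvalues) :
      Matrix (Fin n) (Fin n) ℂ).PosSemidef :=
    Matrix.PosSemidef.diagonal (fun i => Complex.zero_le_real.mpr (Real.sqrt_nonneg _))
  exact hD.mul_mul_conjTranspose_same (hA.1.eigenvectorUnitary : Matrix (Fin n) (Fin n) ℂ)

lemma Matrix.PosSemidef.sqrt_mul_self {n : ℕ} {A : Matrix (Fin n) (Fin n) ℂ}
    (hA : A.PosSemidef) : hA.sqrt * hA.sqrt = A := by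
  have hU : (star (hA.1.eigenvectorUnitary : Matrix (Fin n) (Fin n) ℂ)) *
      (hA.1.eigenvectorUnitary : Matrix (Fin n) (Fin n) ℂ) = 1 :=
    Unitary.coe_star_mul_self hA.1.eigenvectorUnitary
  have hDD : (Matrix.diagonal ((↑) ∘ Real.sqrt ∘ hA.1.eigenvalues) :
      Matrix (Fin n) (Fin n) ℂ) * Matrix.diagonal ((↑) ∘ Real.sqrt ∘ hA.1.eigenvalues)
      = Matrix.diagonal (RCLike.ofReal ∘ hA.1.eigenvalues) := by
    rw [Matrix.diagonal_mul_diagonal]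
    congr 1
    funext i
    simp only [Function.comp_apply]
    rw [← Complex.ofReal_mul, Real.mul_self_sqrt (hA.eigenvalues_nonneg i)]
    rfl
  conv_rhs => rw [hA.1.spectral_theorem, Unitary.conjStarAlgAut_apply]
  unfold Matrix.PosSemidef.sqrt
  simp only [Matrix.mul_assoc]
  rw [← Matrix.mul_assoc (star _) (hA.1.eigenvectorUnitary : Matrix (Fin n) (Fin n) ℂ), hU,
    Matrix.one_mul, ← Matrix.mul_assoc (Matrix.diagonal _), hDD]

lemma Matrix.PosSemidef.sq_sqrt {n : ℕ} {A : Matrix (Fin n) (Fin n) ℂ}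
    (hA : A.PosSemidef) : hA.sqrt ^ 2 = A := by
  rw [pow_two, hA.sqrt_mul_self]

namespace OpMono13

variable {n : ℕ}

lemma smul_posSemidef {c : ℝ} (hc : 0 ≤ c) {X : Matrix (Fin n) (Fin n) ℂ}
    (hX : X.PosSemidef) : ((c : ℂ) • X).PosSemidef := by
  rw [Matrix.posSemidef_iff_dotProduct_mulVec]
  constructor
  · show ((c : ℂ) • X)ᴴ = _
    rw [conjTranspose_smul, hX.1.eq]
    norm_num
  · intro x
    rw [smul_mulVec, dotProduct_smul, smul_eq_mul]
    exact mul_nonneg (by exact_mod_cast Complex.zero_le_real.mpr hc) (hX.dotProduct_mulVec_nonneg x)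

lemma posDef_conj {Y C : Matrix (Fin n) (Fin n) ℂ} (hY : Y.PosDef) (hC : IsUnit C.det) :
    (Cᴴ * Y * C).PosDef := by
  rw [Matrix.posDef_iff_dotProduct_mulVec]
  constructor
  · show (Cᴴ * Y * C)ᴴ = _
    rw [conjTranspose_mul, conjTranspose_mul, conjTranspose_conjTranspose, hY.1.eq,
      Matrix.mul_assoc]
  · intro x hx
    have hCx : C *ᵥ x ≠ 0 := by
      intro h
      apply hx
      have h2 := congrArg (fun v => C⁻¹ *ᵥ v) h
      simpa [Matrix.mulVec_mulVec, Matrix.nonsing_inv_mul _ hC] using h2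
    have key : star x ⬝ᵥ ((Cᴴ * Y * C) *ᵥ x) = star (C *ᵥ x) ⬝ᵥ (Y *ᵥ (C *ᵥ x)) := by
      rw [← Matrix.mulVec_mulVec, ← Matrix.mulVec_mulVec, Matrix.dotProduct_mulVec,
        Matrix.star_mulVec]
    rw [key]
    exact hY.dotProduct_mulVec_pos hCx

lemma posDef_sq {R : Matrix (Fin n) (Fin n) ℂ} (hR : R.PosDef) : (R ^ 2).PosDef := by
  have hdet : IsUnit R.det := isUnit_iff_ne_zero.mpr hR.det_pos.ne'
  have h := posDef_conj (Matrix.PosDef.one) hdet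
  rw [Matrix.mul_one, hR.1.eq, ← pow_two] at h
  exact h

lemma sqrt_posDef {X : Matrix (Fin n) (Fin n) ℂ} (hX : X.PosDef) :
    hX.posSemidef.sqrt.PosDef := by
  have hpsd := hX.posSemidef.posSemidef_sqrt
  refine Matrix.PosDef.of_dotProduct_mulVec_pos hpsd.1 (fun x hx => ?_)
  rcases lt_or_eq_of_le (hpsd.dotProduct_mulVec_nonneg x) with h | h
  · exact h
  · exfalso
    have hS0 : hX.posSemidef.sqrt *ᵥ x = 0 := (hpsd.dotProduct_mulVec_zero_iff x).mp h.symm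
    have hX0 : X *ᵥ x = 0 := by
      rw [← hX.posSemidef.sqrt_mul_self, ← Matrix.mulVec_mulVec, hS0, Matrix.mulVec_zero]
    have := hX.dotProduct_mulVec_pos hx
    rw [hX0, dotProduct_zero] at this
    exact lt_irrefl _ this

lemma one_sub_inv_posSemidef {M : Matrix (Fin n) (Fin n) ℂ} (hM : M.PosDef)
    (h1 : (M - 1).PosSemidef) : ((1 : Matrix (Fin n) (Fin n) ℂ) - M⁻¹).PosSemidef := by
  have hMinv : M⁻¹.PosDef := hM.inv
  set C := hMinv.posSemidef.sqrt with hCdef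
  have hC : C.PosDef := sqrt_posDef hMinv
  have hCH : Cᴴ = C := hC.1.eq
  have hCC : C * C = M⁻¹ := hMinv.posSemidef.sqrt_mul_self
  have hdetM : IsUnit M.det := isUnit_iff_ne_zero.mpr hM.det_pos.ne'
  have hdetC : IsUnit C.det := isUnit_iff_ne_zero.mpr hC.det_pos.ne'
  have hMe : M = C⁻¹ * C⁻¹ := by
    have h2 : M⁻¹⁻¹ = (C * C)⁻¹ := by rw [hCC]
    rwa [Matrix.nonsing_inv_nonsing_inv _ hdetM, Matrix.mul_inv_rev] at h2
  have hCMC : C * M * C = 1 := by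
    rw [hMe, ← Matrix.mul_assoc, Matrix.mul_nonsing_inv _ hdetC,
      Matrix.one_mul, Matrix.nonsing_inv_mul _ hdetC]
  have key : C * (M - 1) * Cᴴ = 1 - M⁻¹ := by
    rw [hCH, Matrix.mul_sub, Matrix.sub_mul, Matrix.mul_one, hCC, hCMC]
  have h := h1.mul_mul_conjTranspose_same C
  rwa [key] at h

lemma inv_antitone {X Y : Matrix (Fin n) (Fin n) ℂ} (hX : X.PosDef) (hY : Y.PosDef)
    (hXY : (Y - X).PosSemidef) : (X⁻¹ - Y⁻¹).PosSemidef := by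
  have hXinv : X⁻¹.PosDef := hX.inv
  set C := hXinv.posSemidef.sqrt with hCdef
  have hC : C.PosDef := sqrt_posDef hXinv
  have hCH : Cᴴ = C := hC.1.eq
  have hCC : C * C = X⁻¹ := hXinv.posSemidef.sqrt_mul_self
  have hdetX : IsUnit X.det := isUnit_iff_ne_zero.mpr hX.det_pos.ne'
  have hdetC : IsUnit C.det := isUnit_iff_ne_zero.mpr hC.det_pos.ne'
  have hXe : X = C⁻¹ * C⁻¹ := by
    have h2 : X⁻¹⁻¹ = (C * C)⁻¹ := by rw [hCC]
    rwa [Matrix.nonsing_inv_nonsing_inv _ hdetX, Matrix.mul_inv_rev] at h2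
  have hCXC : C * X * C = 1 := by
    rw [hXe, ← Matrix.mul_assoc, Matrix.mul_nonsing_inv _ hdetC,
      Matrix.one_mul, Matrix.nonsing_inv_mul _ hdetC]
  have hM : (C * Y * C).PosDef := by
    have h := posDef_conj hY hdetC
    rwa [hCH] at h
  have hM1 : (C * Y * C - 1).PosSemidef := by
    have h := hXY.mul_mul_conjTranspose_same C
    have e : C * (Y - X) * Cᴴ = C * Y * C - 1 := by
      rw [hCH, Matrix.mul_sub, Matrix.sub_mul, hCXC]
    rwa [e] at h
  have hG := one_sub_inv_posSemidef hM hM1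
  have h2 := hG.mul_mul_conjTranspose_same C
  have hMinv : (C * Y * C)⁻¹ = C⁻¹ * (Y⁻¹ * C⁻¹) := by
    rw [Matrix.mul_inv_rev, Matrix.mul_inv_rev]
  have e2 : C * ((1 : Matrix (Fin n) (Fin n) ℂ) - (C * Y * C)⁻¹) * Cᴴ = X⁻¹ - Y⁻¹ := by
    rw [hCH, Matrix.mul_sub, Matrix.sub_mul, Matrix.mul_one, hCC, hMinv,
      Matrix.mul_nonsing_inv_cancel_left _ _ hdetC, Matrix.mul_assoc,
      Matrix.nonsing_inv_mul _ hdetC, Matrix.mul_one]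
  rwa [e2] at h2

lemma sqrt_mono {A B : Matrix (Fin n) (Fin n) ℂ} (hA : A.PosDef) (hB : B.PosDef)
    (hAB : (B - A).PosSemidef) :
    (hB.posSemidef.sqrt - hA.posSemidef.sqrt).PosSemidef := by
  set SA := hA.posSemidef.sqrt with hSAd
  set SB := hB.posSemidef.sqrt with hSBd
  have hSA : SA.PosDef := sqrt_posDef hA
  have hSB : SB.PosDef := sqrt_posDef hB
  have hH : (SB - SA).IsHermitian := hSB.1.sub hSA.1
  apply hH.posSemidef_iff_eigenvalues_nonneg.mpr
  intro i
  show 0 ≤ hH.eigenvalues i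
  set t := hH.eigenvalues i with htd
  set v : Fin n → ℂ := ⇑(hH.eigenvectorBasis i) with hvd
  have hv' : (SB - SA) *ᵥ v = t • v := hH.mulVec_eigenvectorBasis i
  have hv : v ≠ 0 := by
    have h0 := hH.eigenvectorBasis.orthonormal.ne_zero i
    intro h
    apply h0
    ext j
    exact congrFun h j
  have hsum : star v ⬝ᵥ (B - A) *ᵥ v
      = (t : ℂ) * (star v ⬝ᵥ SB *ᵥ v + star v ⬝ᵥ SA *ᵥ v) := calc
    star v ⬝ᵥ (B - A) *ᵥ v = star v ⬝ᵥ (SB ^ 2 - SA ^ 2) *ᵥ v := by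
      rw [hB.posSemidef.sq_sqrt, hA.posSemidef.sq_sqrt]
    _ = star v ⬝ᵥ SB *ᵥ (SB - SA) *ᵥ v + star v ⬝ᵥ (SB - SA) *ᵥ SA *ᵥ v := by
      rw [mulVec_mulVec, mulVec_mulVec, ← dotProduct_add, ← add_mulVec, mul_sub, sub_mul,
        add_sub, sub_add_cancel, pow_two, pow_two]
    _ = (t : ℂ) * (star v ⬝ᵥ SB *ᵥ v) + (star v) ᵥ* (SB - SA)ᴴ ⬝ᵥ SA *ᵥ v := by
      rw [hv', mulVec_smul, dotProduct_smul, RCLike.real_smul_eq_coe_mul,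
        dotProduct_mulVec _ (SB - SA), hH]
      norm_cast
    _ = (t : ℂ) * (star v ⬝ᵥ SB *ᵥ v + star v ⬝ᵥ SA *ᵥ v) := by
      rw [← star_mulVec, hv']
      rw [star_smul, smul_dotProduct, Complex.real_smul, star_trivial t]
      ring
  have h0 : 0 ≤ star v ⬝ᵥ (B - A) *ᵥ v := hAB.dotProduct_mulVec_nonneg v
  have hc : 0 < star v ⬝ᵥ (SB + SA) *ᵥ v := (hSB.add hSA).dotProduct_mulVec_pos hv
  rw [add_mulVec, dotProduct_add] at hc
  set c := star v ⬝ᵥ SB *ᵥ v + star v ⬝ᵥ SA *ᵥ v with hcd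
  rw [hsum] at h0
  have him : c.im = 0 := ((Complex.lt_def.mp hc)).2.symm.trans rfl
  have hcre : 0 < c.re := by
    have := (Complex.lt_def.mp hc).1
    simpa using this
  have hre : 0 ≤ ((t : ℂ) * c).re := by
    have := (Complex.le_def.mp h0).1
    simpa using this
  rw [Complex.mul_re, Complex.ofReal_re, Complex.ofReal_im, him] at hre
  nlinarith [hre, hcre]

lemma mcpow_eq_inv_sqrt {X : Matrix (Fin n) (Fin n) ℂ} (hX : X.PosDef) :
    mcpow X ((-(1 / 2) : ℝ) : ℂ) = (hX.posSemidef.sqrt)⁻¹ := by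
  have hH : X.IsHermitian := hX.posSemidef.1
  have hU : (star (hH.eigenvectorUnitary : Matrix (Fin n) (Fin n) ℂ)) *
      (hH.eigenvectorUnitary : Matrix (Fin n) (Fin n) ℂ) = 1 :=
    Unitary.coe_star_mul_self hH.eigenvectorUnitary
  have hU' : (hH.eigenvectorUnitary : Matrix (Fin n) (Fin n) ℂ) *
      (star (hH.eigenvectorUnitary : Matrix (Fin n) (Fin n) ℂ)) = 1 :=
    Unitary.coe_mul_star_self hH.eigenvectorUnitary
  have hdiag : (Matrix.diagonal (fun i => (hH.eigenvalues i : ℂ) ^ ((-(1 / 2) : ℝ) : ℂ))) *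
      (Matrix.diagonal ((↑) ∘ Real.sqrt ∘ hH.eigenvalues) : Matrix (Fin n) (Fin n) ℂ) = 1 := by
    rw [Matrix.diagonal_mul_diagonal]
    have h1 : ∀ i, (hH.eigenvalues i : ℂ) ^ ((-(1 / 2) : ℝ) : ℂ) *
        ((↑) ∘ Real.sqrt ∘ hH.eigenvalues) i = 1 := by
      intro i
      have hμ : 0 < hH.eigenvalues i := hX.eigenvalues_pos i
      show (hH.eigenvalues i : ℂ) ^ ((-(1 / 2) : ℝ) : ℂ) *
        ((Real.sqrt (hH.eigenvalues i) : ℝ) : ℂ) = 1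
      rw [← Complex.ofReal_cpow hμ.le, ← Complex.ofReal_mul, Real.sqrt_eq_rpow,
        ← Real.rpow_add hμ]
      norm_num
    rw [funext h1, Matrix.diagonal_one]
  symm
  apply Matrix.inv_eq_left_inv
  unfold mcpow
  rw [dif_pos hH, Matrix.PosSemidef.sqrt]
  rw [Matrix.star_eq_conjTranspose] at hU hU'
  have hcanc : ∀ Z : Matrix (Fin n) (Fin n) ℂ,
      (hH.eigenvectorUnitary : Matrix (Fin n) (Fin n) ℂ)ᴴ *
        ((hH.eigenvectorUnitary : Matrix (Fin n) (Fin n) ℂ) * Z) = Z := fun Z => by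
    rw [← Matrix.mul_assoc, hU, Matrix.one_mul]
  show ((hH.eigenvectorUnitary : Matrix (Fin n) (Fin n) ℂ) *
      Matrix.diagonal (fun i => (hH.eigenvalues i : ℂ) ^ ((-(1 / 2) : ℝ) : ℂ)) *
      (hH.eigenvectorUnitary : Matrix (Fin n) (Fin n) ℂ)ᴴ) *
      ((hH.eigenvectorUnitary : Matrix (Fin n) (Fin n) ℂ) *
      Matrix.diagonal ((↑) ∘ Real.sqrt ∘ hH.eigenvalues) *
      (hH.eigenvectorUnitary : Matrix (Fin n) (Fin n) ℂ)ᴴ) = 1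
  simp only [Matrix.mul_assoc]
  rw [hcanc, ← Matrix.mul_assoc (Matrix.diagonal _), hdiag, Matrix.one_mul, hU']

end OpMono13

/-- **Operator monotonicity of x ↦ (λ + x^{−1/2})^{−2}.** -/
theorem inv_sqrt_resolvent_sq_operator_monotone {n : ℕ} (lam : ℝ) (hlam : 0 < lam)
    (A B : Matrix (Fin n) (Fin n) ℂ) (hA : A.PosDef) (hB : B.PosDef)
    (hAB : (B - A).PosSemidef) :
    ((((1 : Matrix (Fin n) (Fin n) ℂ) + (lam : ℂ) • mcpow B ((-(1 / 2) : ℝ) : ℂ)) ^ 2)⁻¹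
      - (((1 : Matrix (Fin n) (Fin n) ℂ) + (lam : ℂ) • mcpow A ((-(1 / 2) : ℝ) : ℂ)) ^ 2)⁻¹
      ).PosSemidef := by
  rw [OpMono13.mcpow_eq_inv_sqrt hA, OpMono13.mcpow_eq_inv_sqrt hB]
  set SA := hA.posSemidef.sqrt with hSAd
  set SB := hB.posSemidef.sqrt with hSBd
  have hSA : SA.PosDef := OpMono13.sqrt_posDef hA
  have hSB : SB.PosDef := OpMono13.sqrt_posDef hB
  have hNAp : SA⁻¹.PosDef := hSA.inv
  have hNBp : SB⁻¹.PosDef := hSB.inv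
  set c : ℂ := (lam : ℂ) with hcd
  have h1A : ((1 : Matrix (Fin n) (Fin n) ℂ) + c • SA⁻¹).PosDef :=
    Matrix.PosDef.add_posSemidef Matrix.PosDef.one
      (OpMono13.smul_posSemidef hlam.le hNAp.posSemidef)
  have h1B : ((1 : Matrix (Fin n) (Fin n) ℂ) + c • SB⁻¹).PosDef :=
    Matrix.PosDef.add_posSemidef Matrix.PosDef.one
      (OpMono13.smul_posSemidef hlam.le hNBp.posSemidef)
  have hPA : (((1 : Matrix (Fin n) (Fin n) ℂ) + c • SA⁻¹) ^ 2).PosDef := OpMono13.posDef_sq h1A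
  have hPB : (((1 : Matrix (Fin n) (Fin n) ℂ) + c • SB⁻¹) ^ 2).PosDef := OpMono13.posDef_sq h1B
  have hmono : (SB - SA).PosSemidef := OpMono13.sqrt_mono hA hB hAB
  have hinv1 : (SA⁻¹ - SB⁻¹).PosSemidef := OpMono13.inv_antitone hSA hSB hmono
  have hinv2 : (A⁻¹ - B⁻¹).PosSemidef := OpMono13.inv_antitone hA hB hAB
  have hsqA : SA⁻¹ * SA⁻¹ = A⁻¹ := by rw [← Matrix.mul_inv_rev, hA.posSemidef.sqrt_mul_self]
  have hsqB : SB⁻¹ * SB⁻¹ = B⁻¹ := by rw [← Matrix.mul_inv_rev, hB.posSemidef.sqrt_mul_self]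
  have expand : ((1 : Matrix (Fin n) (Fin n) ℂ) + c • SA⁻¹) ^ 2
      - ((1 : Matrix (Fin n) (Fin n) ℂ) + c • SB⁻¹) ^ 2
      = (c • SA⁻¹ - c • SB⁻¹) + ((c • SA⁻¹ - c • SB⁻¹)
        + ((c • SA⁻¹) * (c • SA⁻¹) - (c • SB⁻¹) * (c • SB⁻¹))) := by
    have gen : ∀ x y : Matrix (Fin n) (Fin n) ℂ,
        (1 + x) ^ 2 - (1 + y) ^ 2 = (x - y) + ((x - y) + (x * x - y * y)) := by
      intro x y; noncomm_ring
    exact gen _ _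
  have hterm1 : (c • SA⁻¹ - c • SB⁻¹).PosSemidef := by
    rw [← smul_sub, hcd]
    exact OpMono13.smul_posSemidef hlam.le hinv1
  have hterm2 : ((c • SA⁻¹) * (c • SA⁻¹) - (c • SB⁻¹) * (c • SB⁻¹)).PosSemidef := by
    rw [smul_mul_smul_comm, smul_mul_smul_comm, hsqA, hsqB, ← smul_sub, hcd,
      ← Complex.ofReal_mul]
    exact OpMono13.smul_posSemidef (mul_nonneg hlam.le hlam.le) hinv2
  have hdiff : (((1 : Matrix (Fin n) (Fin n) ℂ) + c • SA⁻¹) ^ 2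
      - ((1 : Matrix (Fin n) (Fin n) ℂ) + c • SB⁻¹) ^ 2).PosSemidef := by
    rw [expand]
    exact hterm1.add (hterm1.add hterm2)
  exact OpMono13.inv_antitone hPB hPA hdiff
end
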